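/- arXiv:2509.09425 — 6 statements merged into one kernel-verified Lean document; each statement's English description precedes it below -/
import Mathlib

section
/- Let m ≥ 3 and n ≥ 1 be integers, let i ∈ Z/mZ and j ∈ {1,…,n}, and let x be any vertex of P_m(n) lying in V_{i,j}. Then for every i′ ∈ Z/mZ and j′ ∈ {1,…,n}, the number of neighbours of x in V_{i′,j′} equals: 2(j−1) if (i′, j′) = (i, j); 1 if i′ = i+1 (mod m) or i′ = i−1 (mod m), and j + j′ ≤ n + 1; and 0 otherwise. In particular, the partition {V_{i,j}} of the vertex set of P_m(n) is equitable with quotient matrix the mn × mn block circulant matrix circ(2D_n, E_n, O, …, O, E_n) (with m − 3 zero blocks). -/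
open Polynomial

/-- An `m`-coloured permutation of `{1, …, n}`: a pair `(χ, ψ)` of a colour
function `χ : [n] → ℤ/mℤ` and a permutation `ψ` of `[n]` (positions and letters
are 0-indexed, so the letter `1` of the paper corresponds to `0 : Fin n`). -/
abbrev ColouredPerm (m n : ℕ) := (Fin n → ZMod m) × Equiv.Perm (Fin n)

/-- The map on positions underlying reversal of the prefix of length `k`
(for `1 ≤ k ≤ n`; it is the identity outside this range of `k`). -/
def flipFun (n k : ℕ) : Fin n → Fin n := fun t =>
  if h : t.val < k ∧ k ≤ n then ⟨k - 1 - t.val, by omega⟩ else t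

theorem flipFun_involutive (n k : ℕ) : Function.Involutive (flipFun n k) := by
  intro t
  unfold flipFun
  by_cases h : t.val < k ∧ k ≤ n
  · rw [dif_pos h, dif_pos (by simp only [Fin.val_mk]; omega)]
    apply Fin.ext
    simp only [Fin.val_mk]
    omega
  · rw [dif_neg h, dif_neg h]

/-- Reversal of the prefix of length `k`, as a permutation of positions. -/
def flipPerm (n k : ℕ) : Equiv.Perm (Fin n) := (flipFun_involutive n k).toPerm

/-- The prefix reversal `r_k^ε` acting on `m`-coloured permutations: it
reverses the prefix of length `k` and adds `ε` to the colours in that prefix. -/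
def prefixRev (m n : ℕ) (k : ℕ) (ε : ZMod m) (σ : ColouredPerm m n) :
    ColouredPerm m n :=
  (fun t => if t.val < k then σ.1 (flipPerm n k t) + ε else σ.1 t,
   σ.2 * flipPerm n k)

/-- Adjacency in the generalised pancake graph: two distinct coloured
permutations are adjacent iff one is obtained from the other by a prefix
reversal `r_k^ε` with `1 ≤ k ≤ n` and `ε ∈ {+1, -1}`. -/
def pancakeAdj (m n : ℕ) (σ τ : ColouredPerm m n) : Prop :=
  σ ≠ τ ∧ ∃ k, 1 ≤ k ∧ k ≤ n ∧ ∃ ε : ZMod m, (ε = 1 ∨ ε = -1) ∧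
    (τ = prefixRev m n k ε σ ∨ σ = prefixRev m n k ε τ)

/-- The generalised pancake graph `𝒫_m(n)`. -/
def pancakeGraph (m n : ℕ) : SimpleGraph (ColouredPerm m n) where
  Adj := pancakeAdj m n
  symm := by
    constructor
    rintro a b ⟨hab, k, hk1, hk2, ε, hε, h⟩
    exact ⟨hab.symm, k, hk1, hk2, ε, hε, h.symm⟩
  loopless := by constructor; rintro a ⟨h, -⟩; exact h rfl

open Classical in
/-- The (real) adjacency matrix of the generalised pancake graph `𝒫_m(n)`. -/
noncomputable def pancakeAdjMatrix (m n : ℕ) :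
    Matrix (ColouredPerm m n) (ColouredPerm m n) ℝ :=
  Matrix.of fun σ τ => if pancakeAdj m n σ τ then 1 else 0

/-- The `i`-th largest eigenvalue (`i = 1, 2, …`) of a real matrix `M`,
i.e. the `i`-th largest root of its characteristic polynomial, counted
with multiplicity (junk value `0` if there are fewer than `i` real roots). -/
noncomputable def nthLargestEig {V : Type*} [Fintype V] [DecidableEq V]
    (M : Matrix V V ℝ) (i : ℕ) : ℝ :=
  ((M.charpoly.roots.sort (· ≤ ·)).reverse).getD (i - 1) 0

/-- The diagonal matrix `D_n = diag(0, 1, …, n-1)`. -/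
noncomputable def Dmat (n : ℕ) : Matrix (Fin n) (Fin n) ℝ :=
  Matrix.diagonal fun j => (j.val : ℝ)

/-- The 0/1 matrix `E_n`, whose `(i, j)` entry (1-indexed) is `1` iff
`i + j ≤ n + 1`. -/
noncomputable def Emat (n : ℕ) : Matrix (Fin n) (Fin n) ℝ :=
  Matrix.of fun j j' => if (j.val + 1) + (j'.val + 1) ≤ n + 1 then 1 else 0

/-- The `mn × mn` block circulant matrix `circ(B_0, …, B_{m-1})` whose
`(r, s)` block is `B_{s - r mod m}`. -/
def blockCirc (m n : ℕ) (B : ZMod m → Matrix (Fin n) (Fin n) ℝ) :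
    Matrix (ZMod m × Fin n) (ZMod m × Fin n) ℝ :=
  Matrix.of fun p q => B (q.1 - p.1) p.2 q.2

/-- The part `V_{i,j}` of the vertex set of `𝒫_m(n)`: those coloured
permutations in which the letter `1` (here `0 : Fin n`) occupies position `j`
with colour `i`. -/
def Vpart (m n : ℕ) (i : ZMod m) (j : Fin n) : Set (ColouredPerm m n) :=
  {σ | σ.2 j = ⟨0, j.pos⟩ ∧ σ.1 j = i}


section PancakeAux

lemma flipFun_val {n : ℕ} (k : ℕ) (t : Fin n) (h1 : t.val < k) (h2 : k ≤ n) :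
    flipFun n k t = ⟨k - 1 - t.val, by omega⟩ := dif_pos ⟨h1, h2⟩

lemma flipFun_val' {n : ℕ} (k : ℕ) (t : Fin n) (h1 : ¬ t.val < k) :
    flipFun n k t = t := dif_neg (by tauto)

lemma flipPerm_apply (n k : ℕ) (t : Fin n) : flipPerm n k t = flipFun n k t := rfl

lemma flipPerm_sq (n k : ℕ) : flipPerm n k * flipPerm n k = 1 :=
  Equiv.ext fun t => flipFun_involutive n k t

lemma prefixRev_prefixRev {m n : ℕ} (k : ℕ) (hk2 : k ≤ n) (ε : ZMod m)
    (σ : ColouredPerm m n) :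
    prefixRev m n k (-ε) (prefixRev m n k ε σ) = σ := by
  have hinv : ∀ t, flipFun n k (flipFun n k t) = t := flipFun_involutive n k
  unfold prefixRev
  refine Prod.ext ?_ ?_
  · funext t
    simp only [flipPerm_apply]
    by_cases h : t.val < k
    · rw [if_pos h]
      have hlt : (flipFun n k t).val < k := by
        rw [flipFun_val k t h hk2]; simp only [Fin.val_mk]; omega
      simp only [hlt, ↓reduceIte, hinv]
      ring
    · rw [if_neg h, if_neg h]
  · show σ.2 * flipPerm n k * flipPerm n k = σ.2
    rw [mul_assoc, flipPerm_sq, mul_one]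

lemma flipPerm_zero {n : ℕ} (k : ℕ) (hn : 0 < n) (hk1 : 1 ≤ k) (hk2 : k ≤ n) :
    flipPerm n k ⟨0, hn⟩ = ⟨k - 1, by omega⟩ := by
  rw [flipPerm_apply, flipFun_val k _ (by simp; omega) hk2]
  exact Fin.ext (by simp)

lemma prefixRev_ne {m n : ℕ} (hn : 1 ≤ n) (k : ℕ) (hk1 : 1 ≤ k) (hk2 : k ≤ n)
    (ε : ZMod m) (hε0 : ε ≠ 0) (σ : ColouredPerm m n) :
    prefixRev m n k ε σ ≠ σ := by
  intro h
  have hn0 : 0 < n := hn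
  have h2 : σ.2 * flipPerm n k = σ.2 := congrArg Prod.snd h
  have hfl : flipPerm n k = 1 :=
    mul_left_cancel (a := σ.2) (by rw [mul_one]; exact h2)
  have hk : k = 1 := by
    have := congrArg (fun e : Equiv.Perm (Fin n) => e ⟨0, hn0⟩) hfl
    simp only [Equiv.Perm.one_apply] at this
    have h0 := flipPerm_zero k hn0 hk1 hk2
    rw [this] at h0
    have := congrArg Fin.val h0
    simp only [Fin.val_mk] at this
    omega
  have h1 : (prefixRev m n k ε σ).1 ⟨0, hn0⟩ = σ.1 ⟨0, hn0⟩ := by rw [h]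
  unfold prefixRev at h1
  simp only [Fin.val_mk] at h1
  rw [if_pos (by omega : (0:ℕ) < k)] at h1
  rw [hk] at h1
  rw [flipPerm_zero 1 hn0 le_rfl hn] at h1
  simp only [Nat.sub_self] at h1
  exact hε0 (by
    have : σ.1 ⟨0, hn0⟩ + ε = σ.1 ⟨0, hn0⟩ + 0 := by rw [add_zero]; exact h1
    exact add_left_cancel this)

lemma adj_iff_prefixRev {m n : ℕ} (hm : 3 ≤ m) (hn : 1 ≤ n)
    (x y : ColouredPerm m n) :
    (pancakeGraph m n).Adj x y ↔
      ∃ k, 1 ≤ k ∧ k ≤ n ∧ ∃ ε : ZMod m, (ε = 1 ∨ ε = -1) ∧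
        y = prefixRev m n k ε x := by
  haveI : NeZero m := ⟨by omega⟩
  have h10 : (1 : ZMod m) ≠ 0 := by
    intro h
    have : ((1:ℕ) : ZMod m) = 0 := by exact_mod_cast h
    rw [ZMod.natCast_eq_zero_iff, Nat.dvd_one] at this
    omega
  have hn10 : (-1 : ZMod m) ≠ 0 := fun h => h10 (neg_eq_zero.mp h)
  constructor
  · rintro ⟨hne, k, hk1, hk2, ε, hε, h | h⟩
    · exact ⟨k, hk1, hk2, ε, hε, h⟩
    · refine ⟨k, hk1, hk2, -ε, by rcases hε with h' | h' <;> simp [h'], ?_⟩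
      rw [h, prefixRev_prefixRev k hk2]
  · rintro ⟨k, hk1, hk2, ε, hε, rfl⟩
    refine ⟨Ne.symm (prefixRev_ne hn k hk1 hk2 ε ?_ x), k, hk1, hk2, ε, hε, Or.inl rfl⟩
    rcases hε with h | h <;> rw [h] <;> assumption

lemma mem_Vpart_prefixRev {m n : ℕ} (i : ZMod m) (j : Fin n)
    (x : ColouredPerm m n) (hx : x ∈ Vpart m n i j)
    (i' : ZMod m) (j' : Fin n) (k : ℕ) (ε : ZMod m) (hk1 : 1 ≤ k) (hk2 : k ≤ n) :
    prefixRev m n k ε x ∈ Vpart m n i' j' ↔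
      ((k ≤ j.val ∧ j' = j ∧ i' = i) ∨ (k = j.val + j'.val + 1 ∧ i' = i + ε)) := by
  obtain ⟨hψ, hχ⟩ := hx
  have happ : ∀ a : Fin n, x.2 a = ⟨0, j'.pos⟩ ↔ a = j := by
    intro a
    have : (⟨0, j'.pos⟩ : Fin n) = ⟨0, j.pos⟩ := rfl
    rw [this, ← hψ]
    exact EmbeddingLike.apply_eq_iff_eq x.2
  show (x.2 (flipPerm n k j') = ⟨0, j'.pos⟩ ∧
      (if j'.val < k then x.1 (flipPerm n k j') + ε else x.1 j') = i') ↔ _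
  by_cases h : j'.val < k
  · rw [if_pos h, flipPerm_apply, flipFun_val k j' h hk2, happ]
    constructor
    · rintro ⟨ha, hc⟩
      have hv : k - 1 - j'.val = j.val := congrArg Fin.val ha
      refine Or.inr ⟨by omega, ?_⟩
      rw [← hc, ha, hχ]
    · rintro (⟨hkj, rfl, rfl⟩ | ⟨hkv, rfl⟩)
      · omega
      · have ha : (⟨k - 1 - j'.val, by omega⟩ : Fin n) = j := Fin.ext (by simp; omega)
        exact ⟨ha, by rw [ha, hχ]⟩
  · rw [if_neg h, flipPerm_apply, flipFun_val' k j' h, happ]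
    constructor
    · rintro ⟨rfl, hc⟩
      exact Or.inl ⟨by omega, rfl, by rw [← hc, hχ]⟩
    · rintro (⟨hkj, rfl, rfl⟩ | ⟨hkv, rfl⟩)
      · exact ⟨rfl, hχ⟩
      · omega

end PancakeAux

/-- For `m ≥ 3`, `n ≥ 1`, any vertex `x ∈ V_{i,j}` of
`𝒫_m(n)`, and any `(i', j')`: the number of neighbours of `x` in `V_{i',j'}`
is `2(j−1)` if `(i',j') = (i,j)`, is `1` if `i' = i ± 1 (mod m)` and
`j + j' ≤ n + 1`, and is `0` otherwise (positions `j, j'` are 1-indexed in the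
paper, so `j − 1` here is `j.val`).  In particular the partition `{V_{i,j}}` is
equitable with quotient matrix `circ(2Dₙ, Eₙ, O, …, O, Eₙ)`. -/
theorem pancake_partition_equitable (m n : ℕ) (hm : 3 ≤ m) (hn : 1 ≤ n)
    (i : ZMod m) (j : Fin n) (x : ColouredPerm m n) (hx : x ∈ Vpart m n i j)
    (i' : ZMod m) (j' : Fin n) :
    {y | (pancakeGraph m n).Adj x y ∧ y ∈ Vpart m n i' j'}.ncard =
      (if i' = i ∧ j' = j then 2 * j.val
       else if (i' = i + 1 ∨ i' = i - 1) ∧ (j.val + 1) + (j'.val + 1) ≤ n + 1 then 1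
       else 0) ∧
    ({y | (pancakeGraph m n).Adj x y ∧ y ∈ Vpart m n i' j'}.ncard : ℝ) =
      blockCirc m n
        (fun c => if c = 0 then 2 • Dmat n else if c = 1 ∨ c = -1 then Emat n else 0)
        (i, j) (i', j') := by
  haveI : NeZero m := ⟨by omega⟩
  have h10 : (1 : ZMod m) ≠ 0 := by
    intro h
    have : ((1:ℕ) : ZMod m) = 0 := by exact_mod_cast h
    rw [ZMod.natCast_eq_zero_iff, Nat.dvd_one] at this
    omega
  have h20 : (2 : ZMod m) ≠ 0 := by
    intro h
    have : ((2:ℕ) : ZMod m) = 0 := by exact_mod_cast h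
    rw [ZMod.natCast_eq_zero_iff] at this
    have := Nat.le_of_dvd (by norm_num) this
    omega
  have hn10 : (-1 : ZMod m) ≠ 0 := fun h => h10 (neg_eq_zero.mp h)
  have h1n1 : (1 : ZMod m) ≠ -1 := by
    intro h
    apply h20
    calc (2 : ZMod m) = 1 + 1 := by norm_num
    _ = -1 + 1 := by rw [← h]
    _ = 0 := by ring
  have hn' : 0 < n := hn
  set T : Set (ℕ × ZMod m) := {p | 1 ≤ p.1 ∧ p.1 ≤ n ∧ (p.2 = 1 ∨ p.2 = -1) ∧
      prefixRev m n p.1 p.2 x ∈ Vpart m n i' j'} with hT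
  have hset : {y | (pancakeGraph m n).Adj x y ∧ y ∈ Vpart m n i' j'} =
      (fun p : ℕ × ZMod m => prefixRev m n p.1 p.2 x) '' T := by
    ext y
    simp only [Set.mem_setOf_eq, Set.mem_image, adj_iff_prefixRev hm hn]
    constructor
    · rintro ⟨⟨k, hk1, hk2, ε, hε, rfl⟩, hy⟩
      exact ⟨(k, ε), ⟨hk1, hk2, hε, hy⟩, rfl⟩
    · rintro ⟨⟨k, ε⟩, ⟨hk1, hk2, hε, hy⟩, rfl⟩
      exact ⟨⟨k, hk1, hk2, ε, hε, rfl⟩, hy⟩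
  have hinj : Set.InjOn (fun p : ℕ × ZMod m => prefixRev m n p.1 p.2 x) T := by
    rintro ⟨k, ε⟩ ⟨hk1, hk2, -⟩ ⟨k', ε'⟩ ⟨hk1', hk2', -⟩ heq
    simp only at heq
    have h2 : x.2 * flipPerm n k = x.2 * flipPerm n k' := congrArg Prod.snd heq
    have hfl := mul_left_cancel h2
    have hk : k = k' := by
      have h0 := congrArg (fun e : Equiv.Perm (Fin n) => e ⟨0, hn'⟩) hfl
      simp only [flipPerm_zero k hn' hk1 hk2, flipPerm_zero k' hn' hk1' hk2'] at h0
      have := congrArg Fin.val h0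
      simp only [Fin.val_mk] at this
      omega
    subst hk
    have h1 := congrFun (congrArg Prod.fst heq) ⟨0, hn'⟩
    simp only [prefixRev, Fin.val_mk, if_pos (show 0 < k by omega)] at h1
    exact Prod.ext rfl (add_left_cancel h1)
  have hmem : ∀ k ε, 1 ≤ k → k ≤ n → (prefixRev m n k ε x ∈ Vpart m n i' j' ↔
      ((k ≤ j.val ∧ j' = j ∧ i' = i) ∨ (k = j.val + j'.val + 1 ∧ i' = i + ε))) :=
    fun k ε hk1 hk2 => mem_Vpart_prefixRev i j x hx i' j' k ε hk1 hk2
  have key : T.ncard = (if i' = i ∧ j' = j then 2 * j.val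
       else if (i' = i + 1 ∨ i' = i - 1) ∧ (j.val + 1) + (j'.val + 1) ≤ n + 1 then 1
       else 0) := by
    split_ifs with hA hB
    · obtain ⟨hi, hj⟩ := hA
      have hTeq : T = ↑((Finset.Icc 1 j.val) ×ˢ ({1, -1} : Finset (ZMod m))) := by
        ext ⟨k, ε⟩
        simp only [hT, Set.mem_setOf_eq, Finset.coe_product, Set.mem_prod,
          Finset.mem_coe, Finset.mem_Icc, Finset.mem_insert, Finset.mem_singleton]
        constructor
        · rintro ⟨hk1, hk2, hε, hV⟩
          rw [hmem k ε hk1 hk2] at hV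
          rcases hV with ⟨hkj, -, -⟩ | ⟨-, hc⟩
          · exact ⟨⟨hk1, hkj⟩, hε⟩
          · exfalso
            rw [hi] at hc
            have hε0 : ε = 0 := left_eq_add.mp hc
            rcases hε with rfl | rfl
            · exact h10 hε0
            · exact hn10 hε0
        · rintro ⟨⟨hk1, hkj⟩, hε⟩
          have hk2 : k ≤ n := by have := j.isLt; omega
          exact ⟨hk1, hk2, hε, (hmem k ε hk1 hk2).mpr (Or.inl ⟨hkj, hj, hi⟩)⟩
      rw [hTeq, Set.ncard_coe_finset, Finset.card_product, Nat.card_Icc,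
        Finset.card_insert_of_notMem (by simpa using h1n1), Finset.card_singleton]
      omega
    · obtain ⟨hone, hlen⟩ := hB
      have hε0 : i' - i = 1 ∨ i' - i = -1 := by
        rcases hone with h | h
        · left; rw [h]; ring
        · right; rw [h]; ring
      have hTeq : T = {((j.val + j'.val + 1 : ℕ), i' - i)} := by
        ext ⟨k, ε⟩
        simp only [hT, Set.mem_setOf_eq, Set.mem_singleton_iff, Prod.mk.injEq]
        constructor
        · rintro ⟨hk1, hk2, hε, hV⟩
          rw [hmem k ε hk1 hk2] at hV
          rcases hV with ⟨-, -, hi⟩ | ⟨hkv, hc⟩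
          · exfalso
            rw [hi, sub_self] at hε0
            rcases hε0 with h | h
            · exact h10 h.symm
            · exact hn10 h.symm
          · exact ⟨hkv, by rw [hc]; ring⟩
        · rintro ⟨rfl, rfl⟩
          have hk1 : 1 ≤ j.val + j'.val + 1 := by omega
          have hk2 : j.val + j'.val + 1 ≤ n := by omega
          exact ⟨hk1, hk2, hε0, (hmem _ _ hk1 hk2).mpr (Or.inr ⟨rfl, by ring⟩)⟩
      rw [hTeq, Set.ncard_singleton]
    · have hTeq : T = ∅ := by
        ext ⟨k, ε⟩
        simp only [hT, Set.mem_setOf_eq, Set.mem_empty_iff_false, iff_false]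
        rintro ⟨hk1, hk2, hε, hV⟩
        rw [hmem k ε hk1 hk2] at hV
        rcases hV with ⟨-, hj, hi⟩ | ⟨hkv, hc⟩
        · exact hA ⟨hi, hj⟩
        · apply hB
          refine ⟨?_, by omega⟩
          rcases hε with rfl | rfl
          · exact Or.inl hc
          · exact Or.inr (by rw [hc]; ring)
      rw [hTeq, Set.ncard_empty]
  have hfirst : {y | (pancakeGraph m n).Adj x y ∧ y ∈ Vpart m n i' j'}.ncard =
      (if i' = i ∧ j' = j then 2 * j.val
       else if (i' = i + 1 ∨ i' = i - 1) ∧ (j.val + 1) + (j'.val + 1) ≤ n + 1 then 1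
       else 0) := by
    rw [hset, Set.ncard_image_of_injOn hinj, key]
  refine ⟨hfirst, ?_⟩
  rw [hfirst]
  simp only [blockCirc, Matrix.of_apply]
  by_cases hii : i' = i
  · have hc0 : i' - i = 0 := by rw [hii, sub_self]
    rw [hc0, if_pos rfl]
    have hnot : ¬ (i' = i + 1 ∨ i' = i - 1) := by
      rintro (h | h)
      · rw [hii] at h
        exact h10 (left_eq_add.mp h)
      · rw [hii] at h
        exact h10 (add_eq_left.mp (eq_sub_iff_add_eq.mp h))
    by_cases hjj : j' = j
    · subst hjj
      rw [if_pos ⟨hii, rfl⟩]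
      simp only [Dmat, Matrix.smul_apply, Matrix.diagonal_apply_eq, smul_eq_mul]
      push_cast
      ring
    · rw [if_neg (fun hc => hjj hc.2), if_neg (fun hc => hnot hc.1)]
      simp only [Dmat, Matrix.smul_apply, Matrix.diagonal_apply, smul_eq_mul]
      rw [if_neg (fun h => hjj h.symm)]
      simp
  · rw [if_neg (by tauto)]
    have hsub : i' - i ≠ 0 := sub_ne_zero.mpr hii
    rw [if_neg hsub]
    by_cases hone : i' = i + 1 ∨ i' = i - 1
    · have hc : i' - i = 1 ∨ i' - i = -1 := by
        rcases hone with h | h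
        · left; rw [h]; ring
        · right; rw [h]; ring
      rw [if_pos hc]
      simp only [Emat, Matrix.of_apply]
      by_cases hlen : (j.val + 1) + (j'.val + 1) ≤ n + 1
      · rw [if_pos ⟨hone, hlen⟩, if_pos hlen]; norm_num
      · rw [if_neg (by tauto), if_neg hlen]; norm_num
    · have hc : ¬ (i' - i = 1 ∨ i' - i = -1) := by
        rintro (h | h)
        · exact hone (Or.inl (by rw [← sub_add_cancel i' i, h]; ring))
        · exact hone (Or.inr (by rw [← sub_add_cancel i' i, h]; ring))
      rw [if_neg hc, if_neg (by tauto)]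
      simp
end

section
/- Let n ≥ 1 be an integer, let i ∈ Z/2Z and j ∈ {1,…,n}, and let x be any vertex of the burnt pancake graph P_2(n) lying in V_{i,j}. Then for every i′ ∈ Z/2Z and j′ ∈ {1,…,n}, the number of neighbours of x in V_{i′,j′} equals: j − 1 if (i′, j′) = (i, j); 1 if i′ = i + 1 (mod 2) and j + j′ ≤ n + 1; and 0 otherwise. In particular, the partition {V_{i,j}} of the vertex set of P_2(n) is equitable with quotient matrix the 2n × 2n block matrix circ(D_n, E_n) = [[D_n, E_n],[E_n, D_n]]. -/
open Polynomial

section PancakeHelpers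

lemma flipPerm_coe (n k : ℕ) : ⇑(flipPerm n k) = flipFun n k := rfl

lemma flipPerm_lt {n k : ℕ} (hk : k ≤ n) (t : Fin n) (ht : t.val < k) :
    flipPerm n k t = ⟨k - 1 - t.val, by omega⟩ := by
  rw [flipPerm_coe]; unfold flipFun; rw [dif_pos ⟨ht, hk⟩]

lemma flipPerm_ge {n k : ℕ} (t : Fin n) (ht : ¬ t.val < k) :
    flipPerm n k t = t := by
  rw [flipPerm_coe]; unfold flipFun; rw [dif_neg (fun h => ht h.1)]

lemma prefixRev_snd {m n k : ℕ} (ε : ZMod m) (σ : ColouredPerm m n) (t : Fin n) :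
    (prefixRev m n k ε σ).2 t = σ.2 (flipPerm n k t) := rfl

lemma prefixRev_fst {m n k : ℕ} (ε : ZMod m) (σ : ColouredPerm m n) (t : Fin n) :
    (prefixRev m n k ε σ).1 t = if t.val < k then σ.1 (flipPerm n k t) + ε else σ.1 t := rfl

lemma flipPerm_flipPerm {n k : ℕ} (t : Fin n) : flipPerm n k (flipPerm n k t) = t :=
  flipFun_involutive n k t

lemma prefixRev_invol {n k : ℕ} (hk : k ≤ n) (ε : ZMod 2) (σ : ColouredPerm 2 n) :
    prefixRev 2 n k ε (prefixRev 2 n k ε σ) = σ := by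
  have hεε : ε + ε = 0 := by revert ε; decide
  apply Prod.ext
  · funext t
    rw [prefixRev_fst]
    by_cases ht : t.val < k
    · have h2 : (flipPerm n k t).val < k := by
        rw [flipPerm_lt hk t ht]; simp only [Fin.val_mk]; omega
      rw [if_pos ht, prefixRev_fst, if_pos h2, flipPerm_flipPerm, add_assoc, hεε, add_zero]
    · rw [if_neg ht, prefixRev_fst, if_neg ht]
  · show (σ.2 * flipPerm n k) * flipPerm n k = σ.2
    rw [mul_assoc]
    have : flipPerm n k * flipPerm n k = 1 := Equiv.ext fun t => flipPerm_flipPerm t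
    rw [this, mul_one]

lemma prefixRev_ne_s5 {n k : ℕ} (h1 : 1 ≤ k) (hk : k ≤ n) (σ : ColouredPerm 2 n) :
    prefixRev 2 n k 1 σ ≠ σ := by
  intro h
  have hn : 0 < n := by omega
  by_cases h2 : 2 ≤ k
  · have := congrArg (fun τ : ColouredPerm 2 n => τ.2 ⟨0, hn⟩) h
    simp only [prefixRev_snd] at this
    rw [flipPerm_lt hk ⟨0, hn⟩ (by show 0 < k; omega)] at this
    have := σ.2.injective this
    simp only [Fin.mk.injEq] at this
    omega
  · have hk1 : k = 1 := by omega
    subst hk1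
    have := congrArg (fun τ : ColouredPerm 2 n => τ.1 ⟨0, hn⟩) h
    simp only [prefixRev_fst] at this
    rw [if_pos (by show (0:ℕ) < 1; omega),
        flipPerm_lt hk ⟨0, hn⟩ (by show (0:ℕ) < 1; omega)] at this
    have h0 : (⟨1 - 1 - 0, by omega⟩ : Fin n) = ⟨0, hn⟩ := by apply Fin.ext; simp
    rw [h0] at this
    exact one_ne_zero (add_eq_left.mp this)

lemma adj_iff {n : ℕ} (x y : ColouredPerm 2 n) :
    (pancakeGraph 2 n).Adj x y ↔ ∃ k, 1 ≤ k ∧ k ≤ n ∧ y = prefixRev 2 n k 1 x := by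
  constructor
  · rintro ⟨hne, k, h1, h2, ε, hε, h⟩
    have hε1 : ε = 1 := by
      rcases hε with h' | h'
      · exact h'
      · rw [h']; decide
    subst hε1
    rcases h with h | h
    · exact ⟨k, h1, h2, h⟩
    · exact ⟨k, h1, h2, by rw [h, prefixRev_invol h2]⟩
  · rintro ⟨k, h1, h2, rfl⟩
    exact ⟨(prefixRev_ne_s5 h1 h2 x).symm, k, h1, h2, 1, Or.inl rfl, Or.inl rfl⟩

lemma zmod2_ne_iff {a b : ZMod 2} (h : a ≠ b) : a = b + 1 := by revert h; revert a b; decide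

lemma zmod2_add_one_ne (a : ZMod 2) : ¬ a + 1 = a := by revert a; decide

end PancakeHelpers

/-- **restated.** -/
theorem burnt_pancake_partition_equitable (n : ℕ) (hn : 1 ≤ n)
    (i : ZMod 2) (j : Fin n) (x : ColouredPerm 2 n) (hx : x ∈ Vpart 2 n i j)
    (i' : ZMod 2) (j' : Fin n) :
    {y | (pancakeGraph 2 n).Adj x y ∧ y ∈ Vpart 2 n i' j'}.ncard =
      (if i' = i ∧ j' = j then j.val
       else if i' = i + 1 ∧ (j.val + 1) + (j'.val + 1) ≤ n + 1 then 1
       else 0) ∧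
    ({y | (pancakeGraph 2 n).Adj x y ∧ y ∈ Vpart 2 n i' j'}.ncard : ℝ) =
      blockCirc 2 n (fun c => if c = 0 then Dmat n else Emat n) (i, j) (i', j') := by
  obtain ⟨hxj, hxi⟩ := hx
  have hmem : ∀ y : ColouredPerm 2 n,
      ((pancakeGraph 2 n).Adj x y ∧ y ∈ Vpart 2 n i' j') ↔
      ((∃ k, 1 ≤ k ∧ k ≤ n ∧ y = prefixRev 2 n k 1 x) ∧
        y.2 j' = (⟨0, j'.pos⟩ : Fin n) ∧ y.1 j' = i') :=
    fun y => and_congr (adj_iff x y) Iff.rfl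
  have key : {y | (pancakeGraph 2 n).Adj x y ∧ y ∈ Vpart 2 n i' j'}.ncard =
      (if i' = i ∧ j' = j then j.val
       else if i' = i + 1 ∧ (j.val + 1) + (j'.val + 1) ≤ n + 1 then 1
       else 0) := by
    by_cases h1 : i' = i ∧ j' = j
    · rw [if_pos h1]
      obtain ⟨hi', hj'⟩ := h1
      subst hi'; subst hj'
      have hSeq : {y | (pancakeGraph 2 n).Adj x y ∧ y ∈ Vpart 2 n i' j'} =
          (fun k => prefixRev 2 n k 1 x) '' Set.Icc 1 j'.val := by
        ext y
        rw [Set.mem_setOf_eq, hmem y]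
        constructor
        · rintro ⟨⟨k, hk1, hk2, rfl⟩, hy2, hy1⟩
          refine ⟨k, ⟨hk1, ?_⟩, rfl⟩
          by_contra hgt
          push_neg at hgt
          rw [prefixRev_snd, flipPerm_lt hk2 j' hgt] at hy2
          have hfix := x.2.injective (hy2.trans hxj.symm)
          rw [prefixRev_fst, if_pos hgt, flipPerm_lt hk2 j' hgt, hfix, hxi] at hy1
          exact one_ne_zero (add_eq_left.mp hy1)
        · rintro ⟨k, hk, rfl⟩
          obtain ⟨hk1, hk2⟩ := hk
          have hjn := j'.isLt
          have hkn : k ≤ n := by omega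
          have hnl : ¬ j'.val < k := by omega
          refine ⟨⟨k, hk1, hkn, rfl⟩, ?_, ?_⟩
          · rw [prefixRev_snd, flipPerm_ge j' hnl, hxj]
          · rw [prefixRev_fst, if_neg hnl, hxi]
      have hinj : Set.InjOn (fun k => prefixRev 2 n k 1 x) (Set.Icc 1 j'.val) := by
        intro a ha b hb hab
        obtain ⟨ha1, ha2⟩ := ha
        obtain ⟨hb1, hb2⟩ := hb
        have hjn := j'.isLt
        have ha2' : a ≤ n := by omega
        have hb2' : b ≤ n := by omega
        have hn0 : 0 < n := by omega
        have h := congrArg (fun τ : ColouredPerm 2 n => τ.2 ⟨0, hn0⟩) hab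
        simp only [prefixRev_snd] at h
        rw [flipPerm_lt ha2' ⟨0, hn0⟩ (by show 0 < a; omega),
            flipPerm_lt hb2' ⟨0, hn0⟩ (by show 0 < b; omega)] at h
        have := x.2.injective h
        simp only [Fin.mk.injEq] at this
        omega
      rw [hSeq, Set.ncard_image_of_injOn hinj, ← Finset.coe_Icc,
        Set.ncard_coe_finset, Nat.card_Icc]
      omega
    · rw [if_neg h1]
      by_cases h2 : i' = i + 1 ∧ (j.val + 1) + (j'.val + 1) ≤ n + 1
      · rw [if_pos h2]
        obtain ⟨hi', hcond⟩ := h2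
        have hk0n : j.val + j'.val + 1 ≤ n := by omega
        have hSeq : {y | (pancakeGraph 2 n).Adj x y ∧ y ∈ Vpart 2 n i' j'} =
            {prefixRev 2 n (j.val + j'.val + 1) 1 x} := by
          ext y
          rw [Set.mem_setOf_eq, hmem y, Set.mem_singleton_iff]
          constructor
          · rintro ⟨⟨k, hk1, hk2, rfl⟩, hy2, hy1⟩
            by_cases hlt : j'.val < k
            · rw [prefixRev_snd, flipPerm_lt hk2 j' hlt] at hy2
              have hfix := x.2.injective (hy2.trans hxj.symm)
              have hval : k - 1 - j'.val = j.val := congrArg Fin.val hfix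
              have hkeq : k = j.val + j'.val + 1 := by omega
              rw [hkeq]
            · rw [prefixRev_snd, flipPerm_ge j' hlt] at hy2
              have hj'j : j' = j := x.2.injective (hy2.trans hxj.symm)
              rw [prefixRev_fst, if_neg hlt, hj'j, hxi] at hy1
              exact absurd (hy1.trans hi').symm (zmod2_add_one_ne i)
          · rintro rfl
            have hlt : j'.val < j.val + j'.val + 1 := by omega
            have hfl : flipPerm n (j.val + j'.val + 1) j' = j := by
              rw [flipPerm_lt hk0n j' hlt]
              apply Fin.ext
              simp only [Fin.val_mk]
              omega
            refine ⟨⟨j.val + j'.val + 1, by omega, hk0n, rfl⟩, ?_, ?_⟩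
            · rw [prefixRev_snd, hfl, hxj]
            · rw [prefixRev_fst, if_pos hlt, hfl, hxi, hi']
        rw [hSeq, Set.ncard_singleton]
      · rw [if_neg h2]
        have hSeq : {y | (pancakeGraph 2 n).Adj x y ∧ y ∈ Vpart 2 n i' j'} = ∅ := by
          ext y
          simp only [Set.mem_empty_iff_false, iff_false]
          rw [Set.mem_setOf_eq, hmem y]
          rintro ⟨⟨k, hk1, hk2, rfl⟩, hy2, hy1⟩
          by_cases hlt : j'.val < k
          · rw [prefixRev_snd, flipPerm_lt hk2 j' hlt] at hy2
            have hfix := x.2.injective (hy2.trans hxj.symm)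
            have hval : k - 1 - j'.val = j.val := congrArg Fin.val hfix
            rw [prefixRev_fst, if_pos hlt, flipPerm_lt hk2 j' hlt, hfix, hxi] at hy1
            exact h2 ⟨hy1.symm, by omega⟩
          · rw [prefixRev_snd, flipPerm_ge j' hlt] at hy2
            have hj'j : j' = j := x.2.injective (hy2.trans hxj.symm)
            rw [prefixRev_fst, if_neg hlt, hj'j, hxi] at hy1
            exact h1 ⟨hy1.symm, hj'j⟩
        rw [hSeq, Set.ncard_empty]
  refine ⟨key, ?_⟩
  rw [key]
  show _ = blockCirc 2 n _ (i, j) (i', j')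
  by_cases hii : i' = i
  · subst hii
    by_cases hjj : j' = j
    · subst hjj
      rw [if_pos ⟨rfl, rfl⟩]
      simp [blockCirc, Dmat, Matrix.diagonal_apply_eq]
    · rw [if_neg (by tauto), if_neg (by intro h; exact zmod2_add_one_ne i' h.1.symm)]
      simp [blockCirc, Dmat, Matrix.diagonal_apply_ne _ (fun h => hjj h.symm)]
  · have hi1 : i' = i + 1 := zmod2_ne_iff hii
    have hs : ¬ (i' - i = 0) := fun h => hii (sub_eq_zero.mp h)
    by_cases hc : (j.val + 1) + (j'.val + 1) ≤ n + 1
    · rw [if_neg (by tauto), if_pos ⟨hi1, hc⟩]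
      simp [blockCirc, Emat, if_neg hs, if_pos hc]
    · rw [if_neg (by tauto), if_neg (by tauto)]
      simp [blockCirc, Emat, if_neg hs, if_neg hc]
end

section
/- Let n ≥ 2 be an integer and let t be a real number with t ≠ 0 and t < 2. Then the largest eigenvalue of the real symmetric n×n matrix 2D_n + t·E_n is strictly greater than 2n − 2. -/
open Polynomial

section AuxStatement11

open Matrix Polynomial

private lemma rayleigh_exists {N : ℕ} (hN : 0 < N) {M : Matrix (Fin N) (Fin N) ℝ}
    (hM : M.IsHermitian) (x : Fin N → ℝ) :
    ∃ i, x ⬝ᵥ (M *ᵥ x) ≤ hM.eigenvalues i * (x ⬝ᵥ x) := by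
  classical
  have hne : (Finset.univ : Finset (Fin N)).Nonempty := ⟨⟨0, hN⟩, Finset.mem_univ _⟩
  set U : Matrix (Fin N) (Fin N) ℝ := (hM.eigenvectorUnitary : Matrix (Fin N) (Fin N) ℝ) with hU
  have hstar : (star U : Matrix (Fin N) (Fin N) ℝ) = Uᵀ := by
    ext i j
    simp [Matrix.star_eq_conjTranspose, Matrix.conjTranspose_apply]
  set y : Fin N → ℝ := Uᵀ *ᵥ x with hy
  have hdiag : Matrix.diagonal ((RCLike.ofReal : ℝ → ℝ) ∘ hM.eigenvalues)
      = Matrix.diagonal hM.eigenvalues := by congr 1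
  have key : x ⬝ᵥ (M *ᵥ x) = ∑ i, hM.eigenvalues i * (y i)^2 := by
    conv_lhs => rw [hM.spectral_theorem]
    rw [Unitary.conjStarAlgAut_apply, ← hU]
    rw [hdiag, ← Matrix.mulVec_mulVec, ← Matrix.mulVec_mulVec,
      Matrix.dotProduct_mulVec x U, ← Matrix.mulVec_transpose, hstar]
    simp only [← hy, dotProduct, Matrix.mulVec_diagonal]
    exact Finset.sum_congr rfl fun i _ => by ring
  have hUU : U * star U = 1 := Matrix.mem_unitaryGroup_iff.mp hM.eigenvectorUnitary.2
  have key2 : x ⬝ᵥ x = ∑ i, (y i)^2 := by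
    conv_lhs => rw [show x ⬝ᵥ x = x ⬝ᵥ ((U * star U) *ᵥ x) by rw [hUU, Matrix.one_mulVec]]
    rw [← Matrix.mulVec_mulVec, Matrix.dotProduct_mulVec x U, ← Matrix.mulVec_transpose, hstar]
    simp only [← hy, dotProduct]
    exact Finset.sum_congr rfl fun i _ => by ring
  obtain ⟨i, -, hi⟩ := Finset.exists_mem_eq_sup' hne hM.eigenvalues
  refine ⟨i, ?_⟩
  rw [key, key2, ← hi, Finset.mul_sum]
  refine Finset.sum_le_sum fun j _ => ?_
  exact mul_le_mul_of_nonneg_right (Finset.le_sup' _ (Finset.mem_univ j)) (sq_nonneg _)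

private lemma mem_roots_of_mem_spectrum {N : ℕ} {M : Matrix (Fin N) (Fin N) ℝ} {μ : ℝ}
    (h : μ ∈ spectrum ℝ M) : μ ∈ M.charpoly.roots := by
  classical
  rw [Polynomial.mem_roots (M.charpoly_monic.ne_zero)]
  have hdet : (Matrix.scalar (Fin N) μ - M).det = 0 := by
    have hnu : ¬ IsUnit (algebraMap ℝ (Matrix (Fin N) (Fin N) ℝ) μ - M) := h
    rw [Matrix.isUnit_iff_isUnit_det] at hnu
    have halg : algebraMap ℝ (Matrix (Fin N) (Fin N) ℝ) μ = Matrix.scalar (Fin N) μ := rfl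
    rw [halg] at hnu
    simpa [isUnit_iff_ne_zero, not_not] using hnu
  show Polynomial.eval μ M.charpoly = 0
  rw [Matrix.charpoly, eval_det, Matrix.matPolyEquiv_charmatrix]
  simpa using hdet

private lemma le_nthLargestEig {V : Type*} [Fintype V] [DecidableEq V] {M : Matrix V V ℝ} {r : ℝ}
    (h : r ∈ M.charpoly.roots) : r ≤ nthLargestEig M 1 := by
  classical
  unfold nthLargestEig
  set L := M.charpoly.roots.sort (· ≤ ·) with hL
  have hrL : r ∈ L.reverse := by
    rw [List.mem_reverse]; exact (Multiset.mem_sort _).mpr h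
  have hPW : L.reverse.Pairwise (fun a b => b ≤ a) := by
    rw [List.pairwise_reverse]
    exact Multiset.pairwise_sort _ (· ≤ ·)
  cases hrev : L.reverse with
  | nil => rw [hrev] at hrL; simp at hrL
  | cons a tl =>
    rw [hrev] at hrL hPW
    show r ≤ (a :: tl).getD (1-1) 0
    simp only [Nat.sub_self, List.getD_cons_zero]
    rcases List.mem_cons.mp hrL with rfl | hr
    · exact le_refl r
    · exact (List.pairwise_cons.mp hPW).1 r hr

end AuxStatement11

open Matrix in
theorem largest_eig_two_D_add_smul_E (n : ℕ) (hn : 2 ≤ n) (t : ℝ)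
    (ht0 : t ≠ 0) (ht2 : t < 2) :
    nthLargestEig ((2 : ℝ) • Dmat n + t • Emat n) 1 > 2 * n - 2 := by
  classical
  set M : Matrix (Fin n) (Fin n) ℝ := (2 : ℝ) • Dmat n + t • Emat n with hMdef
  have hn0 : 0 < n := by omega
  have hnR : (2:ℝ) ≤ (n:ℝ) := by exact_mod_cast hn
  have hherm : M.IsHermitian := by
    show M.conjTranspose = M
    ext i j
    have hD : Dmat n j i = Dmat n i j := by
      unfold Dmat
      rcases eq_or_ne i j with rfl | h
      · rfl
      · rw [Matrix.diagonal_apply_ne _ (Ne.symm h), Matrix.diagonal_apply_ne _ h]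
    have hE : Emat n j i = Emat n i j := by
      unfold Emat
      simp only [Matrix.of_apply]
      have : (j.val + 1) + (i.val + 1) = (i.val + 1) + (j.val + 1) := by ring
      rw [this]
    simp [hMdef, Matrix.conjTranspose_apply, Matrix.add_apply, Matrix.smul_apply, hD, hE]
  set a : Fin n := ⟨n - 1, by omega⟩ with ha
  set b : Fin n := ⟨0, hn0⟩ with hb
  have hab : a ≠ b := by
    simp only [ha, hb, Fin.mk.injEq, ne_eq]
    omega
  have hd : (0:ℝ) < 2 * (n:ℝ) - 2 - t := by nlinarith
  set ε : ℝ := t / (2 * (n:ℝ) - 2 - t) with he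
  have hed : ε * (2 * (n:ℝ) - 2 - t) = t := by
    rw [he]; exact div_mul_cancel₀ t hd.ne'
  set x : Fin n → ℝ := (Pi.single a 1 : Fin n → ℝ) + ε • (Pi.single b 1 : Fin n → ℝ) with hx
  -- matrix entries
  have hMaa : M a a = 2 * (n:ℝ) - 2 := by
    have h1 : Dmat n a a = (n:ℝ) - 1 := by
      unfold Dmat
      rw [Matrix.diagonal_apply_eq]
      simp only [ha]
      push_cast [Nat.cast_sub (by omega : 1 ≤ n)]
      ring
    have h2 : Emat n a a = 0 := by
      unfold Emat
      simp only [Matrix.of_apply, ha]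
      rw [if_neg (by omega)]
    simp [hMdef, Matrix.add_apply, Matrix.smul_apply, h1, h2]
    ring
  have hMab : M a b = t := by
    have h1 : Dmat n a b = 0 := by
      unfold Dmat; rw [Matrix.diagonal_apply_ne _ hab]
    have h2 : Emat n a b = 1 := by
      unfold Emat
      simp only [Matrix.of_apply, ha, hb]
      rw [if_pos (by omega)]
    simp [hMdef, Matrix.add_apply, Matrix.smul_apply, h1, h2]
  have hMba : M b a = t := by
    have h1 : Dmat n b a = 0 := by
      unfold Dmat; rw [Matrix.diagonal_apply_ne _ (Ne.symm hab)]
    have h2 : Emat n b a = 1 := by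
      unfold Emat
      simp only [Matrix.of_apply, ha, hb]
      rw [if_pos (by omega)]
    simp [hMdef, Matrix.add_apply, Matrix.smul_apply, h1, h2]
  have hMbb : M b b = t := by
    have h1 : Dmat n b b = 0 := by
      unfold Dmat; rw [Matrix.diagonal_apply_eq]; simp [hb]
    have h2 : Emat n b b = 1 := by
      unfold Emat
      simp only [Matrix.of_apply, hb]
      rw [if_pos (by omega)]
    simp [hMdef, Matrix.add_apply, Matrix.smul_apply, h1, h2]
  have hquad : x ⬝ᵥ (M *ᵥ x) = M a a + ε * M a b + ε * M b a + ε^2 * M b b := by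
    simp only [hx, Matrix.mulVec_add, Matrix.mulVec_smul, Matrix.mulVec_single_one,
      add_dotProduct, smul_dotProduct, single_dotProduct,
      dotProduct_add, dotProduct_smul, Matrix.col_apply, Pi.add_apply, Pi.smul_apply,
      smul_eq_mul, mul_one]
    ring
  have hnorm : x ⬝ᵥ x = 1 + ε^2 := by
    simp only [hx, add_dotProduct, smul_dotProduct, single_dotProduct,
      dotProduct_add, dotProduct_smul, Pi.add_apply, Pi.smul_apply,
      smul_eq_mul]
    rw [Pi.single_eq_same, Pi.single_eq_of_ne hab, Pi.single_eq_of_ne (Ne.symm hab),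
      Pi.single_eq_same]
    ring
  obtain ⟨i, hi⟩ := rayleigh_exists hn0 hherm x
  have hgt : 2 * (n:ℝ) - 2 < hherm.eigenvalues i := by
    have h1 : x ⬝ᵥ (M *ᵥ x) = (2 * (n:ℝ) - 2) * (x ⬝ᵥ x) + ε * t := by
      rw [hquad, hnorm, hMaa, hMab, hMba, hMbb]
      linear_combination (-ε) * hed
    have het : 0 < ε * t := by
      have : ε * t = t^2 / (2 * (n:ℝ) - 2 - t) := by rw [he]; ring
      rw [this]
      exact div_pos (by positivity) hd
    have hx2 : (0:ℝ) < x ⬝ᵥ x := by rw [hnorm]; positivity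
    have : (2 * (n:ℝ) - 2) * (x ⬝ᵥ x) < hherm.eigenvalues i * (x ⬝ᵥ x) := by
      calc (2 * (n:ℝ) - 2) * (x ⬝ᵥ x) < x ⬝ᵥ (M *ᵥ x) := by rw [h1]; linarith
        _ ≤ hherm.eigenvalues i * (x ⬝ᵥ x) := hi
    exact lt_of_mul_lt_mul_right this (le_of_lt hx2)
  have hmem : hherm.eigenvalues i ∈ spectrum ℝ M := hherm.eigenvalues_mem_spectrum_real i
  have hroot : hherm.eigenvalues i ∈ M.charpoly.roots := mem_roots_of_mem_spectrum hmem
  have := le_nthLargestEig hroot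
  calc (2 * (n:ℝ) - 2) < hherm.eigenvalues i := hgt
    _ ≤ nthLargestEig M 1 := this
end

section
/- Let n ≥ 2 be an integer. Then the largest eigenvalue of the real symmetric n×n matrix D_n − E_n is strictly greater than n − 1. -/
open Polynomial

open Matrix in
lemma eval_charpoly_eq {N : ℕ} (M : Matrix (Fin N) (Fin N) ℝ) (r : ℝ) :
    M.charpoly.eval r = (Matrix.scalar (Fin N) r - M).det := by
  rw [Matrix.charpoly, eval_det, matPolyEquiv_charmatrix]
  simp

/-- For `n ≥ 2`, the largest eigenvalue of the real symmetric
matrix `Dₙ − Eₙ` is strictly greater than `n − 1`. -/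
theorem largest_eig_D_sub_E (n : ℕ) (hn : 2 ≤ n) :
    nthLargestEig (Dmat n - Emat n) 1 > n - 1 := by
  have hpos : 0 < n := by omega
  set M : Matrix (Fin n) (Fin n) ℝ := Dmat n - Emat n with hMdef
  -- M is symmetric
  have hM : M.IsHermitian := by
    ext i j
    simp only [hMdef, Matrix.conjTranspose_apply, star_trivial, Matrix.sub_apply, Dmat, Emat,
      Matrix.diagonal_apply, Matrix.of_apply]
    have h1 : (if j = i then ((j : ℕ) : ℝ) else 0) = (if i = j then ((i : ℕ) : ℝ) else 0) := by
      rcases eq_or_ne i j with h | h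
      · subst h; rfl
      · rw [if_neg h.symm, if_neg h]
    have h2 : (if (j.val + 1) + (i.val + 1) ≤ n + 1 then (1 : ℝ) else 0)
        = (if (i.val + 1) + (j.val + 1) ≤ n + 1 then (1 : ℝ) else 0) := by
      rw [Nat.add_comm (j.val + 1)]
    rw [h1, h2]
  set lam : Fin n → ℝ := hM.eigenvalues with hlam
  set U : Matrix (Fin n) (Fin n) ℝ := (hM.eigenvectorUnitary : Matrix (Fin n) (Fin n) ℝ)
    with hUdef
  have hU1 : U * star U = 1 := Matrix.mem_unitaryGroup_iff.mp hM.eigenvectorUnitary.2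
  have hspec : M = U * Matrix.diagonal lam * star U := by
    have h := hM.spectral_theorem
    rwa [show (RCLike.ofReal ∘ hM.eigenvalues : Fin n → ℝ) = lam by
      funext i; simp [hlam]] at h
  -- indices
  set Z : Fin n := ⟨0, hpos⟩ with hZ
  set L : Fin n := ⟨n - 1, by omega⟩ with hL
  have hZL : Z ≠ L := by simp only [hZ, hL, ne_eq, Fin.mk.injEq]; omega
  -- matrix entries
  have hMZZ : M Z Z = -1 := by
    simp only [hMdef, Matrix.sub_apply, Dmat, Emat, Matrix.diagonal_apply_eq, Matrix.of_apply,
      hZ]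
    rw [if_pos (by omega)]
    norm_num
  have hMZL : M Z L = -1 := by
    simp only [hMdef, Matrix.sub_apply, Dmat, Emat, Matrix.diagonal_apply_ne _ hZL,
      Matrix.of_apply, hZ, hL]
    rw [if_pos (by omega)]
    norm_num
    exact Matrix.diagonal_apply_ne _ hZL
  have hMLZ : M L Z = -1 := by
    simp only [hMdef, Matrix.sub_apply, Dmat, Emat, Matrix.diagonal_apply_ne _ hZL.symm,
      Matrix.of_apply, hZ, hL]
    rw [if_pos (by omega)]
    norm_num
    exact Matrix.diagonal_apply_ne _ hZL.symm
  have hMLL : M L L = (n : ℝ) - 1 := by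
    simp only [hMdef, Matrix.sub_apply, Dmat, Emat, Matrix.diagonal_apply_eq, Matrix.of_apply,
      hL]
    rw [if_neg (by omega)]
    have : ((n - 1 : ℕ) : ℝ) = (n : ℝ) - 1 := by
      have := Nat.cast_sub (by omega : 1 ≤ n) (R := ℝ) (m := 1) (n := n)
      simpa using this
    rw [this]
    ring
  -- the test vector
  set a : ℝ := -(1 / (n : ℝ)) with ha
  set v : Fin n → ℝ := Pi.single Z a + Pi.single L 1 with hv
  have hnR : (0 : ℝ) < (n : ℝ) := by exact_mod_cast hpos
  -- quadratic form value
  have hqval : dotProduct v (Matrix.mulVec M v) = -a ^ 2 - 2 * a + ((n : ℝ) - 1) := by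
    simp only [hv, Matrix.mulVec_add, Matrix.mulVec_single, add_dotProduct,
      single_dotProduct, Pi.add_apply, Pi.smul_apply, op_smul_eq_mul, Matrix.col_apply,
      hMZZ, hMZL, hMLZ, hMLL]
    ring
  have hvval : dotProduct v v = a ^ 2 + 1 := by
    simp only [hv, add_dotProduct, single_dotProduct, Pi.add_apply,
      Pi.single_apply, if_pos rfl, if_neg hZL, if_neg hZL.symm, if_true]
    ring
  -- Rayleigh bound: some eigenvalue exceeds n - 1
  have hex : ∃ i, (n : ℝ) - 1 < lam i := by
    by_contra hcon
    push_neg at hcon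
    set w : Fin n → ℝ := Matrix.vecMul v U with hw
    have hsUv : Matrix.mulVec (star U) v = w := by
      rw [show (star U : Matrix (Fin n) (Fin n) ℝ) = U.transpose from rfl, Matrix.mulVec_transpose, hw]
    have hq2 : dotProduct v (Matrix.mulVec M v) = dotProduct (fun i => w i * lam i) w := by
      rw [Matrix.dotProduct_mulVec, hspec, ← Matrix.vecMul_vecMul, ← Matrix.vecMul_vecMul,
        ← Matrix.dotProduct_mulVec, hsUv]
      congr 1
      funext i
      rw [← hw]
      exact Matrix.vecMul_diagonal _ _ _
    have hv2 : dotProduct v v = dotProduct w w := by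
      symm
      conv_lhs => rw [← hsUv]
      rw [Matrix.dotProduct_mulVec, hsUv, hw, Matrix.vecMul_vecMul, hU1, Matrix.vecMul_one]
    have hle : dotProduct v (Matrix.mulVec M v) ≤ ((n : ℝ) - 1) * (dotProduct v v) := by
      rw [hq2, hv2, dotProduct, dotProduct, Finset.mul_sum]
      apply Finset.sum_le_sum
      intro i _
      have h1 : w i * lam i * w i = lam i * (w i * w i) := by ring
      rw [h1]
      exact mul_le_mul_of_nonneg_right (hcon i) (mul_self_nonneg _)
    rw [hqval, hvval] at hle
    have han : a * (n : ℝ) = -1 := by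
      rw [ha]; field_simp
    nlinarith [sq_nonneg a, mul_pos hnR hnR]
  obtain ⟨i0, hi0⟩ := hex
  -- lam i0 is a root of the characteristic polynomial
  have hroot : M.charpoly.eval (lam i0) = 0 := by
    rw [eval_charpoly_eq]
    have hfac : Matrix.scalar (Fin n) (lam i0) - M
        = U * (Matrix.scalar (Fin n) (lam i0) - Matrix.diagonal lam) * star U := by
      rw [Matrix.mul_sub, Matrix.sub_mul, ← hspec]
      congr 1
      rw [← (Matrix.scalar_commute (lam i0) (fun r => Commute.all _ _) U).eq, Matrix.mul_assoc,
        hU1, Matrix.mul_one]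
    rw [hfac, Matrix.det_mul, Matrix.det_mul]
    have hdetU : U.det * (star U).det = 1 := by
      rw [← Matrix.det_mul, hU1, Matrix.det_one]
    have hdiag : (Matrix.scalar (Fin n) (lam i0) - Matrix.diagonal lam).det = 0 := by
      rw [Matrix.scalar_apply, Matrix.diagonal_sub, Matrix.det_diagonal]
      apply Finset.prod_eq_zero (Finset.mem_univ i0)
      ring
    rw [hdiag]
    ring
  have hne : M.charpoly ≠ 0 := (Matrix.charpoly_monic M).ne_zero
  have hmem : lam i0 ∈ M.charpoly.roots := by
    rw [Polynomial.mem_roots']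
    exact ⟨hne, hroot⟩
  -- conclude about the largest root
  unfold nthLargestEig
  set l : List ℝ := M.charpoly.roots.sort (· ≤ ·) with hldef
  have hxl : lam i0 ∈ l := (Multiset.mem_sort _).mpr hmem
  have hsorted : List.Pairwise (· ≤ ·) l := Multiset.pairwise_sort _ _
  cases hrev : l.reverse with
  | nil =>
    have hnil : l = [] := by simpa using congrArg List.reverse hrev
    rw [hnil] at hxl
    simp at hxl
  | cons b t =>
    have hx' : lam i0 ∈ b :: t := by rw [← hrev]; exact List.mem_reverse.mpr hxl
    have hsr : List.Pairwise (fun p q => q ≤ p) (b :: t) := by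
      rw [← hrev]
      exact List.pairwise_reverse.mpr hsorted
    have hba : lam i0 ≤ b := by
      rcases List.mem_cons.mp hx' with h | h
      · exact le_of_eq h
      · exact List.rel_of_pairwise_cons hsr h
    show b > (n : ℝ) - 1
    linarith
end

section
/- For every integer n ≥ 1, the spectrum of the real symmetric n×n matrix 2D_n + 2E_n is exactly the set {0, 2, 4, …, 2n} \ {2⌊n/2⌋}, with each of these n numbers occurring as an eigenvalue of multiplicity 1. -/
open Polynomial

/- Auxiliary lemmas for Statement 15 -/

lemma sum_ite_interval (a b m : ℕ) (c : ℝ) :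
    ∑ i ∈ Finset.range m, (if a ≤ i ∧ i < b then c else 0)
      = ((min b m - min a m : ℕ) : ℝ) * c := by
  induction m with
  | zero => simp
  | succ m ih =>
    rw [Finset.sum_range_succ, ih]
    by_cases h : a ≤ m ∧ m < b
    · rw [if_pos h]
      rw [show min b (m+1) - min a (m+1) = (min b m - min a m) + 1 by omega]
      push_cast
      ring
    · rw [if_neg h]
      rw [show min b (m+1) - min a (m+1) = min b m - min a m by omega]
      ring

lemma mulVec_formula (n : ℕ) (V : ℕ → ℝ) (j : Fin n) :
    ((2 : ℝ) • Dmat n + (2 : ℝ) • Emat n).mulVec (fun j' => V j'.val) j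
      = 2 * (j.val : ℝ) * V j.val
        + ∑ i ∈ Finset.range n, (if j.val + i + 1 ≤ n then 2 * V i else 0) := by
  simp only [Matrix.mulVec, dotProduct, Matrix.add_apply, Matrix.smul_apply,
    Dmat, Emat, Matrix.diagonal_apply, Matrix.of_apply, smul_eq_mul]
  rw [Finset.sum_congr rfl (fun j' _ => show
      (2 * (if j = j' then ((j.val : ℝ)) else 0)
        + 2 * (if (j.val + 1) + (j'.val + 1) ≤ n + 1 then (1:ℝ) else 0)) * V j'.val
      = (if j = j' then 2 * (j.val : ℝ) * V j'.val else 0)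
        + (if j.val + j'.val + 1 ≤ n then 2 * V j'.val else 0) from by
    split_ifs <;> first | ring1 | (exfalso; omega))]
  rw [Finset.sum_add_distrib, Finset.sum_ite_eq Finset.univ j
    (fun j' => 2 * (j.val : ℝ) * V j'.val)]
  simp only [Finset.mem_univ, if_true]
  congr 1
  exact Fin.sum_univ_eq_sum_range (fun i => if j.val + i + 1 ≤ n then 2 * V i else 0) n

lemma eigen_exists (n k : ℕ) (hk : k ≤ n) (hne : k ≠ n / 2) (hn : 1 ≤ n) :
    ∃ v : Fin n → ℝ, v ≠ 0 ∧
      ((2 : ℝ) • Dmat n + (2 : ℝ) • Emat n).mulVec v = ((2 * k : ℕ) : ℝ) • v := by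
  rcases (by omega : 2 * k + 1 < n ∨ n < 2 * k) with hA | hB
  · -- small eigenvalues
    set V : ℕ → ℝ := fun i =>
      if k ≤ i ∧ i < k + 1 then ((n : ℝ) - 2 * k - 1)
      else if k + 1 ≤ i ∧ i < n - k then -1 else 0 with hV
    refine ⟨fun j' => V j'.val, ?_, ?_⟩
    · intro h0
      have h1 : V k = 0 := congrFun h0 ⟨k, by omega⟩
      simp only [hV] at h1
      rw [if_pos (by omega : k ≤ k ∧ k < k + 1)] at h1
      have : (2 * k + 1 : ℕ) < n := hA
      have : (2 * (k:ℝ) + 1) < n := by exact_mod_cast this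
      linarith
    · funext j
      rw [mulVec_formula]
      have hsum : ∀ i, (if j.val + i + 1 ≤ n then 2 * V i else 0)
          = (if k ≤ i ∧ i < min (k + 1) (n - j.val) then 2 * ((n : ℝ) - 2 * k - 1) else 0)
            + (if k + 1 ≤ i ∧ i < min (n - k) (n - j.val) then -2 else 0) := by
        intro i
        simp only [hV]
        split_ifs <;> first | ring1 | (exfalso; omega)
      rw [Finset.sum_congr rfl (fun i _ => hsum i), Finset.sum_add_distrib,
        sum_ite_interval, sum_ite_interval]
      simp only [Pi.smul_apply, smul_eq_mul]
      set t := j.val with ht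
      have htn : t < n := j.isLt
      rcases (by omega : t < k ∨ t = k ∨ (k < t ∧ t < n - k) ∨ n - k ≤ t) with h | h | h | h
      · have hVt : V t = 0 := by simp only [hV]; rw [if_neg (by omega), if_neg (by omega)]
        have e1 : ((min (min (k+1) (n-t)) n - min k n : ℕ) : ℝ) = 1 := by
          rw [show min (min (k+1) (n-t)) n - min k n = 1 by omega]; norm_num
        have e2 : ((min (min (n-k) (n-t)) n - min (k+1) n : ℕ) : ℝ) = (n : ℝ) - 2*k - 1 := by
          rw [show min (min (n-k) (n-t)) n - min (k+1) n = n - (2*k+1) by omega,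
            Nat.cast_sub (by omega)]
          push_cast; ring
        rw [hVt, e1, e2]; push_cast; ring
      · have hVt : V t = (n : ℝ) - 2 * k - 1 := by simp only [hV]; rw [if_pos (by omega)]
        have e1 : ((min (min (k+1) (n-t)) n - min k n : ℕ) : ℝ) = 1 := by
          rw [show min (min (k+1) (n-t)) n - min k n = 1 by omega]; norm_num
        have e2 : ((min (min (n-k) (n-t)) n - min (k+1) n : ℕ) : ℝ) = (n : ℝ) - 2*k - 1 := by
          rw [show min (min (n-k) (n-t)) n - min (k+1) n = n - (2*k+1) by omega,
            Nat.cast_sub (by omega)]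
          push_cast; ring
        rw [hVt, e1, e2]; push_cast [h]; ring
      · have hVt : V t = -1 := by simp only [hV]; rw [if_neg (by omega), if_pos (by omega)]
        have e1 : ((min (min (k+1) (n-t)) n - min k n : ℕ) : ℝ) = 1 := by
          rw [show min (min (k+1) (n-t)) n - min k n = 1 by omega]; norm_num
        have e2 : ((min (min (n-k) (n-t)) n - min (k+1) n : ℕ) : ℝ)
            = (n : ℝ) - t - k - 1 := by
          rw [show min (min (n-k) (n-t)) n - min (k+1) n = n - (t + k + 1) by omega,
            Nat.cast_sub (by omega)]
          push_cast; ring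
        rw [hVt, e1, e2]; push_cast; ring
      · have hVt : V t = 0 := by simp only [hV]; rw [if_neg (by omega), if_neg (by omega)]
        have e1 : ((min (min (k+1) (n-t)) n - min k n : ℕ) : ℝ) = 0 := by
          rw [show min (min (k+1) (n-t)) n - min k n = 0 by omega]; norm_num
        have e2 : ((min (min (n-k) (n-t)) n - min (k+1) n : ℕ) : ℝ) = 0 := by
          rw [show min (min (n-k) (n-t)) n - min (k+1) n = 0 by omega]; norm_num
        rw [hVt, e1, e2]; push_cast; ring
  · -- large eigenvalues
    set s := n - k with hs
    set V : ℕ → ℝ := fun i =>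
      if s ≤ i ∧ i < k then 1
      else if k ≤ i ∧ i < k + 1 then ((n : ℝ) - 2 * k) else 0 with hV
    refine ⟨fun j' => V j'.val, ?_, ?_⟩
    · intro h0
      have h1 : V s = 0 := congrFun h0 ⟨s, by omega⟩
      simp only [hV] at h1
      rw [if_pos (by omega : s ≤ s ∧ s < k)] at h1
      exact one_ne_zero h1
    · funext j
      rw [mulVec_formula]
      have hsum : ∀ i, (if j.val + i + 1 ≤ n then 2 * V i else 0)
          = (if s ≤ i ∧ i < min k (n - j.val) then 2 else 0)
            + (if k ≤ i ∧ i < min (k + 1) (n - j.val) then 2 * ((n : ℝ) - 2 * k) else 0) := by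
        intro i
        simp only [hV]
        split_ifs <;> first | ring1 | (exfalso; omega)
      rw [Finset.sum_congr rfl (fun i _ => hsum i), Finset.sum_add_distrib,
        sum_ite_interval, sum_ite_interval]
      simp only [Pi.smul_apply, smul_eq_mul]
      set t := j.val with ht
      have htn : t < n := j.isLt
      rcases (by omega : t < s ∨ (s ≤ t ∧ t < k) ∨ t = k ∨ k < t) with h | h | h | h
      · have hVt : V t = 0 := by simp only [hV]; rw [if_neg (by omega), if_neg (by omega)]
        have e1 : ((min (min k (n-t)) n - min s n : ℕ) : ℝ) = 2 * (k : ℝ) - n := by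
          rw [show min (min k (n-t)) n - min s n = 2*k - n by omega,
            Nat.cast_sub (by omega)]
          push_cast; ring
        have e2 : ((min (min (k+1) (n-t)) n - min k n : ℕ) : ℝ) = 1 := by
          rw [show min (min (k+1) (n-t)) n - min k n = 1 by omega]; norm_num
        rw [hVt, e1, e2]; push_cast; ring
      · have hVt : V t = 1 := by simp only [hV]; rw [if_pos (by omega)]
        have e1 : ((min (min k (n-t)) n - min s n : ℕ) : ℝ) = (k : ℝ) - t := by
          rw [show min (min k (n-t)) n - min s n = k - t by omega,
            Nat.cast_sub (by omega)]
        have e2 : ((min (min (k+1) (n-t)) n - min k n : ℕ) : ℝ) = 0 := by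
          rw [show min (min (k+1) (n-t)) n - min k n = 0 by omega]; norm_num
        rw [hVt, e1, e2]; push_cast; ring
      · have hVt : V t = (n : ℝ) - 2 * k := by
          simp only [hV]; rw [if_neg (by omega), if_pos (by omega)]
        have e1 : ((min (min k (n-t)) n - min s n : ℕ) : ℝ) = 0 := by
          rw [show min (min k (n-t)) n - min s n = 0 by omega]; norm_num
        have e2 : ((min (min (k+1) (n-t)) n - min k n : ℕ) : ℝ) = 0 := by
          rw [show min (min (k+1) (n-t)) n - min k n = 0 by omega]; norm_num
        rw [hVt, e1, e2]; push_cast [h]; ring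
      · have hVt : V t = 0 := by simp only [hV]; rw [if_neg (by omega), if_neg (by omega)]
        have e1 : ((min (min k (n-t)) n - min s n : ℕ) : ℝ) = 0 := by
          rw [show min (min k (n-t)) n - min s n = 0 by omega]; norm_num
        have e2 : ((min (min (k+1) (n-t)) n - min k n : ℕ) : ℝ) = 0 := by
          rw [show min (min (k+1) (n-t)) n - min k n = 0 by omega]; norm_num
        rw [hVt, e1, e2]; push_cast; ring

lemma isRoot_charpoly_of_eigen {N : ℕ} (M : Matrix (Fin N) (Fin N) ℝ) (t : ℝ)
    (v : Fin N → ℝ) (hv : v ≠ 0) (h : M.mulVec v = t • v) :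
    M.charpoly.IsRoot t := by
  have hmap : (Matrix.charmatrix M).map (Polynomial.eval t) = t • (1 : Matrix (Fin N) (Fin N) ℝ) - M := by
    ext i j
    by_cases hij : i = j
    · subst hij
      simp [Matrix.charmatrix_apply_eq, Matrix.map_apply, Matrix.one_apply]
    · simp [Matrix.charmatrix_apply_ne _ _ _ hij, Matrix.map_apply, Matrix.one_apply_ne hij]
  have heval : M.charpoly.eval t = (t • (1 : Matrix (Fin N) (Fin N) ℝ) - M).det := by
    rw [Matrix.charpoly, ← hmap]
    exact RingHom.map_det (Polynomial.evalRingHom t) _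
  have hdet : (t • (1 : Matrix (Fin N) (Fin N) ℝ) - M).det = 0 := by
    rw [← Matrix.exists_mulVec_eq_zero_iff]
    refine ⟨v, hv, ?_⟩
    rw [Matrix.sub_mulVec, Matrix.smul_mulVec, Matrix.one_mulVec, h, sub_self]
  rw [Polynomial.IsRoot, heval, hdet]

/-- For every `n ≥ 1`, the spectrum of the real symmetric
matrix `2Dₙ + 2Eₙ` is exactly `{0, 2, 4, …, 2n} \\ {2⌊n/2⌋}`, each of these
`n` numbers being an eigenvalue of multiplicity `1`; stated as an equality of
the multiset of roots of the characteristic polynomial with the multiset of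
values `2k`, `k ∈ {0, …, n} \\ {⌊n/2⌋}` (each with multiplicity one). -/
theorem spectrum_two_D_add_two_E (n : ℕ) (hn : 1 ≤ n) :
    ((2 : ℝ) • Dmat n + (2 : ℝ) • Emat n).charpoly.roots =
      ((Finset.range (n + 1)).erase (n / 2)).val.map (fun k => ((2 * k : ℕ) : ℝ)) := by
  set M := (2 : ℝ) • Dmat n + (2 : ℝ) • Emat n with hM
  have hroot : ∀ k ∈ (Finset.range (n + 1)).erase (n / 2),
      M.charpoly.IsRoot ((2 * k : ℕ) : ℝ) := by
    intro k hk
    rw [Finset.mem_erase, Finset.mem_range] at hk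
    obtain ⟨v, hv, hvec⟩ := eigen_exists n k (by omega) hk.1 hn
    exact isRoot_charpoly_of_eigen M _ v hv hvec
  have hne0 : M.charpoly ≠ 0 := (Matrix.charpoly_monic M).ne_zero
  have hfinj : Function.Injective (fun k : ℕ => ((2 * k : ℕ) : ℝ)) := by
    intro a b h
    have : (2 * a : ℕ) = (2 * b : ℕ) := Nat.cast_injective h
    omega
  set ms := ((Finset.range (n + 1)).erase (n / 2)).val.map
    (fun k => ((2 * k : ℕ) : ℝ)) with hms
  have hnodup : ms.Nodup := (Finset.nodup _).map hfinj
  have hle : ms ≤ M.charpoly.roots := by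
    rw [Multiset.le_iff_count]
    intro a
    by_cases ha : a ∈ ms
    · rw [Multiset.count_eq_one_of_mem hnodup ha]
      refine Multiset.one_le_count_iff_mem.2 ?_
      obtain ⟨k, hk, rfl⟩ := Multiset.mem_map.1 ha
      exact Polynomial.mem_roots'.2 ⟨hne0, hroot k hk⟩
    · rw [Multiset.count_eq_zero_of_notMem ha]
      exact Nat.zero_le _
  have hcard : Multiset.card M.charpoly.roots ≤ Multiset.card ms := by
    rw [hms, Multiset.card_map]
    have h1 : Multiset.card ((Finset.range (n + 1)).erase (n / 2)).val
        = ((Finset.range (n + 1)).erase (n / 2)).card := rfl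
    rw [h1, Finset.card_erase_of_mem (by simp; omega), Finset.card_range]
    calc Multiset.card M.charpoly.roots ≤ M.charpoly.natDegree := Polynomial.card_roots' _
      _ = Fintype.card (Fin n) := Matrix.charpoly_natDegree_eq_dim M
      _ = n := Fintype.card_fin n
    -- (n+1)-1 = n handled?
  exact (Multiset.eq_of_le_of_card_le hle hcard).symm
end

section
/- Let m ≡ 0 (mod 4) and n ≥ 2 be integers. Then every even integer 2k with 0 ≤ k ≤ n is an eigenvalue of the adjacency matrix of the generalised pancake graph P_m(n). -/
open Polynomial

lemma isRoot_charpoly_of_eigen_s16 {V : Type*} [Fintype V] [DecidableEq V]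
    (M : Matrix V V ℝ) (lam : ℝ) (f : V → ℝ) (hf : f ≠ 0)
    (h : M.mulVec f = lam • f) : M.charpoly.IsRoot lam := by
  have hdet : ((Matrix.scalar V lam - M)).det = 0 := by
    rw [← Matrix.exists_mulVec_eq_zero_iff]
    refine ⟨f, hf, ?_⟩
    rw [Matrix.sub_mulVec, h]
    simp [Matrix.scalar, Matrix.mulVec_diagonal]
    funext i
    simp [Matrix.mulVec_diagonal, Pi.algebraMap_apply]
  show Polynomial.eval lam M.charpoly = 0
  rw [Matrix.charpoly, eval_det, Matrix.matPolyEquiv_charmatrix]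
  rw [Polynomial.eval_sub, Polynomial.eval_X, Polynomial.eval_C]
  exact hdet

namespace PancakeAux

variable {m n : ℕ}

lemma flipPerm_apply (n k : ℕ) (t : Fin n) : flipPerm n k t = flipFun n k t := rfl

lemma flipFun_val {k : ℕ} {t : Fin n} (h1 : t.val < k) (h2 : k ≤ n) :
    flipFun n k t = ⟨k - 1 - t.val, by omega⟩ := dif_pos ⟨h1, h2⟩

lemma flipFun_id {k : ℕ} {t : Fin n} (h1 : k ≤ t.val) :
    flipFun n k t = t := dif_neg (by omega)

lemma prefixRev_snd (k : ℕ) (ε : ZMod m) (σ : ColouredPerm m n) :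
    (prefixRev m n k ε σ).2 = σ.2 * flipPerm n k := rfl

lemma prefixRev_fst (k : ℕ) (ε : ZMod m) (σ : ColouredPerm m n) (t : Fin n) :
    (prefixRev m n k ε σ).1 t
      = if t.val < k then σ.1 (flipPerm n k t) + ε else σ.1 t := rfl

lemma flipPerm_mul_self (n k : ℕ) : flipPerm n k * flipPerm n k = 1 := by
  ext t
  simp [Equiv.Perm.mul_apply, flipPerm_apply, flipFun_involutive n k t]

lemma prefixRev_prefixRev (k : ℕ) (ε : ZMod m) (σ : ColouredPerm m n) :
    prefixRev m n k (-ε) (prefixRev m n k ε σ) = σ := by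
  refine Prod.ext ?_ ?_
  · funext t
    rw [prefixRev_fst]
    by_cases ht : t.val < k
    · rw [if_pos ht, prefixRev_fst]
      have hle : k ≤ n ∨ ¬ (k ≤ n) := em _
      by_cases hkn : k ≤ n
      · have hval : flipPerm n k t = (⟨k - 1 - t.val, by omega⟩ : Fin n) := by
          rw [flipPerm_apply, flipFun_val ht hkn]
        rw [hval]
        have h2 : k - 1 - t.val < k := by omega
        rw [if_pos h2]
        have h3 : flipPerm n k (⟨k - 1 - t.val, by omega⟩ : Fin n) = t := by
          rw [← hval]
          exact (flipFun_involutive n k t)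
        rw [h3]
        abel
      · have hid : flipPerm n k t = t := by
          rw [flipPerm_apply]; exact dif_neg (by tauto)
        rw [hid, if_pos ht, hid]
        abel
    · rw [if_neg ht, prefixRev_fst, if_neg ht]
  · show (σ.2 * flipPerm n k) * flipPerm n k = σ.2
    rw [mul_assoc, flipPerm_mul_self, mul_one]

lemma two_ne_zero' (hm1 : 4 ≤ m) : (2 : ZMod m) ≠ 0 := by
  haveI : NeZero m := ⟨by omega⟩
  intro h
  have : ((2 : ℕ) : ZMod m) = 0 := by exact_mod_cast h
  rw [ZMod.natCast_eq_zero_iff] at this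
  have := Nat.le_of_dvd (by norm_num) this
  omega

lemma prefixRev_ne (hm : 4 ≤ m) {j : ℕ} (hj1 : 1 ≤ j) (hjn : j ≤ n)
    {ε : ZMod m} (hε : ε = 1 ∨ ε = -1) (σ : ColouredPerm m n) :
    prefixRev m n j ε σ ≠ σ := by
  intro h
  have h0 : (prefixRev m n j ε σ).1 = σ.1 := congrArg Prod.fst h
  have hn1 : 0 < n := lt_of_lt_of_le hj1 hjn
  have e0 := congrFun h0 ⟨0, hn1⟩
  have e1 := congrFun h0 ⟨j - 1, by omega⟩
  rw [prefixRev_fst, if_pos (show (0:ℕ) < j from hj1)] at e0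
  rw [prefixRev_fst, if_pos (show j - 1 < j by omega)] at e1
  have hf0 : flipPerm n j (⟨0, hn1⟩ : Fin n) = (⟨j - 1, by omega⟩ : Fin n) := by
    rw [flipPerm_apply, flipFun_val hj1 hjn]
    apply Fin.ext; simp
  have hf1 : flipPerm n j (⟨j - 1, by omega⟩ : Fin n) = (⟨0, hn1⟩ : Fin n) := by
    rw [flipPerm_apply, flipFun_val (show j - 1 < j by omega) hjn]
    apply Fin.ext; simp
  rw [hf0] at e0
  rw [hf1] at e1
  have : σ.1 ⟨0, hn1⟩ + (ε + ε) = σ.1 ⟨0, hn1⟩ + 0 := by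
    rw [add_zero, ← add_assoc, e1, e0]
  have h2 : ε + ε = 0 := add_left_cancel this
  have h4 : (2 : ZMod m) ≠ 0 := two_ne_zero' hm
  rcases hε with rfl | rfl
  · exact h4 (by linear_combination h2)
  · apply h4
    have : -(2 : ZMod m) = 0 := by linear_combination h2
    linear_combination -this

lemma prefixRev_injOn (hn1 : 0 < n) {j j' : ℕ} (hj1 : 1 ≤ j) (hjn : j ≤ n)
    (hj1' : 1 ≤ j') (hjn' : j' ≤ n) {ε ε' : ZMod m} (σ : ColouredPerm m n)
    (h : prefixRev m n j ε σ = prefixRev m n j' ε' σ) : j = j' ∧ ε = ε' := by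
  have h2 : σ.2 * flipPerm n j = σ.2 * flipPerm n j' := congrArg Prod.snd h
  have hf : flipPerm n j = flipPerm n j' := mul_left_cancel h2
  have hval := congrArg (fun (e : Equiv.Perm (Fin n)) => (e ⟨0, hn1⟩).val) hf
  simp only [flipPerm_apply] at hval
  rw [flipFun_val hj1 hjn, flipFun_val hj1' hjn'] at hval
  simp only at hval
  have hjj : j = j' := by omega
  subst hjj
  refine ⟨rfl, ?_⟩
  have h1 := congrFun (congrArg Prod.fst h) ⟨0, hn1⟩
  rw [prefixRev_fst, prefixRev_fst, if_pos (show (0:ℕ) < j from hj1),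
    if_pos (show (0:ℕ) < j from hj1)] at h1
  exact add_left_cancel h1

end PancakeAux

namespace PancakeAux
open Finset

variable {m n : ℕ}

lemma neighbor_filter_eq (hm : 4 ≤ m) [NeZero m] (hn1 : 0 < n) (σ : ColouredPerm m n) :
    haveI := Classical.decPred (pancakeAdj m n σ)
    Finset.univ.filter (pancakeAdj m n σ)
      = ((Finset.Icc 1 n) ×ˢ ({1, -1} : Finset (ZMod m))).image
          (fun je => prefixRev m n je.1 je.2 σ) := by
  classical
  ext τ
  simp only [Finset.mem_filter, Finset.mem_univ, true_and, Finset.mem_image,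
    Finset.mem_product, Finset.mem_Icc, Finset.mem_insert, Finset.mem_singleton]
  constructor
  · rintro ⟨hne, j, hj1, hjn, ε, hε, hcase | hcase⟩
    · exact ⟨(j, ε), ⟨⟨hj1, hjn⟩, hε⟩, hcase.symm⟩
    · refine ⟨(j, -ε), ⟨⟨hj1, hjn⟩, ?_⟩, ?_⟩
      · rcases hε with rfl | rfl
        · right; rfl
        · left; simp
      · rw [hcase, prefixRev_prefixRev]
  · rintro ⟨⟨j, ε⟩, ⟨⟨hj1, hjn⟩, hε⟩, rfl⟩
    exact ⟨(prefixRev_ne hm hj1 hjn hε σ).symm, j, hj1, hjn, ε, hε, Or.inl rfl⟩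

lemma mulVec_pancake (hm : 4 ≤ m) [NeZero m] (hn1 : 0 < n)
    (f : ColouredPerm m n → ℝ) (σ : ColouredPerm m n) :
    (pancakeAdjMatrix m n).mulVec f σ
      = ∑ j ∈ Finset.Icc 1 n, ∑ ε ∈ ({1, -1} : Finset (ZMod m)),
          f (prefixRev m n j ε σ) := by
  classical
  have hinj : Set.InjOn (fun je : ℕ × ZMod m => prefixRev m n je.1 je.2 σ)
      (((Finset.Icc 1 n) ×ˢ ({1, -1} : Finset (ZMod m)) : Finset (ℕ × ZMod m))
        : Set (ℕ × ZMod m)) := by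
    rintro ⟨j, ε⟩ hje ⟨j', ε'⟩ hje' h
    simp only [Finset.mem_coe, Finset.mem_product, Finset.mem_Icc] at hje hje'
    obtain ⟨hjj, hee⟩ := prefixRev_injOn hn1 hje.1.1 hje.1.2 hje'.1.1 hje'.1.2 σ h
    exact Prod.ext hjj hee
  calc (pancakeAdjMatrix m n).mulVec f σ
      = ∑ τ : ColouredPerm m n, (if pancakeAdj m n σ τ then 1 else 0) * f τ := by
        simp [Matrix.mulVec, dotProduct, pancakeAdjMatrix]
    _ = ∑ τ : ColouredPerm m n, (if pancakeAdj m n σ τ then f τ else 0) := by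
        apply Finset.sum_congr rfl; intro τ _
        by_cases h : pancakeAdj m n σ τ <;> simp [h]
    _ = ∑ τ ∈ Finset.univ.filter (pancakeAdj m n σ), f τ := by
        rw [Finset.sum_filter]
    _ = ∑ τ ∈ ((Finset.Icc 1 n) ×ˢ ({1, -1} : Finset (ZMod m))).image
          (fun je => prefixRev m n je.1 je.2 σ), f τ := by
        rw [neighbor_filter_eq hm hn1 σ]
    _ = ∑ je ∈ (Finset.Icc 1 n) ×ˢ ({1, -1} : Finset (ZMod m)),
          f (prefixRev m n je.1 je.2 σ) :=
        Finset.sum_image (fun x hx y hy h =>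
          hinj (Finset.mem_coe.mpr hx) (Finset.mem_coe.mpr hy) h)
    _ = _ := Finset.sum_product _ _ _

end PancakeAux

namespace PancakeAux

variable {m n : ℕ}

/-- The real character `cos(π i / 2)` on `ZMod m`. -/
noncomputable def cc (m : ℕ) (i : ZMod m) : ℝ :=
  if i.val % 4 = 0 then 1 else if i.val % 4 = 2 then -1 else 0

lemma cc_key (hm1 : 1 ≤ m) (hm4 : m % 4 = 0) (i : ZMod m) :
    cc m (i + 1) + cc m (i - 1) = 0 := by
  haveI : NeZero m := ⟨by omega⟩
  have hm : 4 ≤ m := by omega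
  have hv1 : (1 : ZMod m).val = 1 := by
    rw [ZMod.val_one_eq_one_mod]; exact Nat.mod_eq_of_lt (by omega)
  have hvadd : (i + 1).val % 4 = (i.val + 1) % 4 := by
    rw [ZMod.val_add, hv1]
    rw [Nat.mod_mod_of_dvd _ (by omega : 4 ∣ m)]
  have hsub : i - 1 = i + ((m - 1 : ℕ) : ZMod m) := by
    have : ((m - 1 : ℕ) : ZMod m) = -1 := by
      have : ((m : ℕ) : ZMod m) = 0 := ZMod.natCast_self m
      push_cast [Nat.cast_sub (by omega : 1 ≤ m)]
      rw [this]; ring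
    rw [this]; ring
  have hvm1 : ((m - 1 : ℕ) : ZMod m).val = m - 1 := by
    rw [ZMod.val_natCast]
    exact Nat.mod_eq_of_lt (by omega)
  have hvsub : (i - 1).val % 4 = (i.val + 3) % 4 := by
    rw [hsub, ZMod.val_add, hvm1, Nat.mod_mod_of_dvd _ (by omega : 4 ∣ m)]
    omega
  unfold cc
  rw [hvadd, hvsub]
  have h4 : i.val % 4 = 0 ∨ i.val % 4 = 1 ∨ i.val % 4 = 2 ∨ i.val % 4 = 3 := by omega
  rcases h4 with h | h | h | h <;>
    · rw [show (i.val + 1) % 4 = (i.val % 4 + 1) % 4 by omega,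
         show (i.val + 3) % 4 = (i.val % 4 + 3) % 4 by omega, h]
      norm_num

lemma cc_zero (hm : 1 ≤ m) : cc m 0 = 1 := by
  haveI : NeZero m := ⟨by omega⟩
  simp [cc, ZMod.val_zero]

end PancakeAux
set_option maxHeartbeats 1000000


namespace PancakeAux

variable {m n : ℕ}

/-- The eigenvector for eigenvalue `2k`, `k < n`. -/
noncomputable def fvec (m n k : ℕ) (hkn : k < n) : ColouredPerm m n → ℝ := fun σ =>
  if σ.2 ⟨k, hkn⟩ = ⟨0, Nat.lt_of_le_of_lt (Nat.zero_le k) hkn⟩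
    then cc m (σ.1 ⟨k, hkn⟩) else 0

lemma one_ne_neg_one (hm : 4 ≤ m) : (1 : ZMod m) ≠ -1 := by
  intro h
  exact two_ne_zero' hm (by linear_combination h)

lemma eigen_lt (hm1 : 1 ≤ m) (hm4 : m % 4 = 0) {k : ℕ} (hkn : k < n)
    (σ : ColouredPerm m n) :
    ∑ j ∈ Finset.Icc 1 n, ∑ ε ∈ ({1, -1} : Finset (ZMod m)),
        fvec m n k hkn (prefixRev m n j ε σ)
      = 2 * k * fvec m n k hkn σ := by
  have hm : 4 ≤ m := by omega
  have hone := one_ne_neg_one (m := m) hm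
  have key : ∀ j ∈ Finset.Icc 1 n,
      (∑ ε ∈ ({1, -1} : Finset (ZMod m)), fvec m n k hkn (prefixRev m n j ε σ))
        = if j ≤ k then 2 * fvec m n k hkn σ else 0 := by
    intro j hj
    rw [Finset.mem_Icc] at hj
    rw [Finset.sum_pair hone]
    by_cases hjk : j ≤ k
    · rw [if_pos hjk]
      have hfix : ∀ ε : ZMod m, fvec m n k hkn (prefixRev m n j ε σ)
          = fvec m n k hkn σ := by
        intro ε
        unfold fvec
        have h2 : (prefixRev m n j ε σ).2 ⟨k, hkn⟩ = σ.2 ⟨k, hkn⟩ := by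
          rw [prefixRev_snd]
          show σ.2 (flipPerm n j ⟨k, hkn⟩) = _
          rw [flipPerm_apply, flipFun_id (show j ≤ k from hjk)]
        have h1 : (prefixRev m n j ε σ).1 ⟨k, hkn⟩ = σ.1 ⟨k, hkn⟩ :=
          (prefixRev_fst j ε σ _).trans (if_neg (by simp; omega))
        rw [h2, h1]
      rw [hfix 1, hfix (-1)]; ring
    · rw [if_neg hjk]
      push_neg at hjk
      have hd : j - 1 - k < n := by omega
      have hflip : flipPerm n j ⟨k, hkn⟩ = ⟨j - 1 - k, hd⟩ := by
        rw [flipPerm_apply, flipFun_val (show k < j from hjk) hj.2]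
      have hval : ∀ ε : ZMod m, fvec m n k hkn (prefixRev m n j ε σ)
          = if σ.2 ⟨j - 1 - k, hd⟩
                = ⟨0, Nat.lt_of_le_of_lt (Nat.zero_le k) hkn⟩
              then cc m (σ.1 ⟨j - 1 - k, hd⟩ + ε) else 0 := by
        intro ε
        unfold fvec
        have h2 : (prefixRev m n j ε σ).2 ⟨k, hkn⟩ = σ.2 ⟨j - 1 - k, hd⟩ := by
          rw [prefixRev_snd]
          show σ.2 (flipPerm n j ⟨k, hkn⟩) = _
          rw [hflip]
        have h1 : (prefixRev m n j ε σ).1 ⟨k, hkn⟩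
            = σ.1 ⟨j - 1 - k, hd⟩ + ε := by
          rw [prefixRev_fst, if_pos (show k < j from hjk), hflip]
        rw [h2, h1]
      rw [hval 1, hval (-1)]
      split_ifs with hc
      · have := cc_key hm1 hm4 (σ.1 ⟨j - 1 - k, hd⟩)
        rw [sub_eq_add_neg] at this
        exact this
      · norm_num
  rw [Finset.sum_congr rfl key]
  have hfil : (Finset.Icc 1 n).filter (fun j => j ≤ k) = Finset.Icc 1 k := by
    ext x
    simp only [Finset.mem_filter, Finset.mem_Icc]
    omega
  rw [Finset.sum_ite, Finset.sum_const, Finset.sum_const_zero, add_zero, hfil,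
    Nat.card_Icc]
  simp only [Nat.add_sub_cancel, nsmul_eq_mul]
  ring

lemma fvec_ne_zero (hm1 : 1 ≤ m) {k : ℕ} (hkn : k < n) :
    fvec m n k hkn ≠ 0 := by
  haveI : NeZero m := ⟨by omega⟩
  intro h
  set σ0 : ColouredPerm m n :=
    (fun _ => 0, Equiv.swap ⟨0, Nat.lt_of_le_of_lt (Nat.zero_le k) hkn⟩ ⟨k, hkn⟩)
  have := congrFun h σ0
  rw [fvec] at this
  simp only [σ0, Equiv.swap_apply_right, if_pos rfl, Pi.zero_apply] at this
  rw [cc_zero hm1] at this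
  norm_num at this

end PancakeAux


/-- For `m ≡ 0 (mod 4)` (with `m ≥ 1`) and `n ≥ 2`, every
even integer `2k` with `0 ≤ k ≤ n` is an eigenvalue of the adjacency matrix of
`𝒫_m(n)`, i.e. a root of its characteristic polynomial. -/
theorem pancake_even_integral_eigenvalues (m n : ℕ) (hm1 : 1 ≤ m)
    (hm4 : m % 4 = 0) (hn : 2 ≤ n) (k : ℕ) (hk : k ≤ n) :
    haveI : NeZero m := ⟨by omega⟩
    (pancakeAdjMatrix m n).charpoly.IsRoot ((2 * k : ℕ) : ℝ) := by
  haveI : NeZero m := ⟨by omega⟩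
  have hm : 4 ≤ m := by omega
  have hn1 : 0 < n := by omega
  rcases Nat.lt_or_ge k n with hkn | hge
  · apply isRoot_charpoly_of_eigen_s16 _ _ (PancakeAux.fvec m n k hkn)
      (PancakeAux.fvec_ne_zero hm1 hkn)
    funext σ
    rw [PancakeAux.mulVec_pancake hm hn1, PancakeAux.eigen_lt hm1 hm4 hkn σ]
    simp only [Pi.smul_apply, smul_eq_mul]
    push_cast
    ring
  · have hkn : k = n := le_antisymm hk hge
    subst hkn
    apply isRoot_charpoly_of_eigen_s16 _ _ (fun _ => (1 : ℝ))
    · intro h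
      have := congrFun h ((fun _ => 0, 1) : ColouredPerm m _)
      norm_num at this
    · funext σ
      rw [PancakeAux.mulVec_pancake hm hn1]
      simp only [Finset.sum_pair (PancakeAux.one_ne_neg_one hm), Finset.sum_const,
        Nat.card_Icc, Pi.smul_apply, smul_eq_mul, nsmul_eq_mul]
      push_cast
      ring
end
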